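/- Let m, n be positive integers with m ≥ 2, let G = C_m ⊕ C_{mn}, let {g_1, g_2} be a generating set of G consisting of two distinct elements with ord(g_2) = mn, and let g ∈ G. Then the sequence S = g^{mn−1} · (g_1 + g)^{m−1} · (g_2 + g)^{mn−1} · (−g_1 + g_2 + g)^{m−1} has length 2m + 2mn − 4 (which equals s(G) − 1) and has no zero-sum subsequence of length mn = exp(G). -/

import Mathlib

lemma split_le_add {α : Type*} [DecidableEq α] {T A B : Multiset α} (h : T ≤ A + B) :
    ∃ u v, u ≤ A ∧ v ≤ B ∧ T = u + v := by
  refine ⟨T ∩ A, T - A, Multiset.inter_le_right, ?_, ?_⟩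
  · have h2 : T - A ≤ A + B - A := tsub_le_tsub_right h A
    simpa using h2
  · ext x
    simp only [Multiset.count_add, Multiset.count_inter, Multiset.count_sub]
    omega

lemma exp_smul (m n : ℕ) (x : ZMod m × ZMod (m * n)) : ((m * n : ℕ) : ℤ) • x = 0 := by
  rw [natCast_zsmul]
  apply Prod.ext
  · show (m * n) • x.1 = 0
    simp [nsmul_eq_mul, Nat.cast_mul]
  · show (m * n) • x.2 = 0
    simp [nsmul_eq_mul]

lemma key_lemma (m n : ℕ) (hm : 2 ≤ m) (hn : 0 < n)
    (g1 g2 : ZMod m × ZMod (m * n)) (hg2 : addOrderOf g2 = m * n)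
    (hgen : AddSubgroup.closure ({g1, g2} : Set (ZMod m × ZMod (m * n))) = ⊤)
    (x : ℤ) (hx : x • g1 ∈ AddSubgroup.zmultiples g2) : (m : ℤ) ∣ x := by
  haveI : NeZero m := ⟨by omega⟩
  haveI : NeZero (m * n) := ⟨by positivity⟩
  set H := AddSubgroup.zmultiples g2 with hH
  let π := QuotientAddGroup.mk' H
  have hsurj : Function.Surjective π := QuotientAddGroup.mk'_surjective H
  have hg2z : π g2 = 0 := by
    rw [QuotientAddGroup.mk'_apply, QuotientAddGroup.eq_zero_iff]
    exact AddSubgroup.mem_zmultiples g2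
  have htop : AddSubgroup.closure ({π g1} : Set _) = ⊤ := by
    have h1 : AddSubgroup.map π ⊤ = ⊤ := AddSubgroup.map_top_of_surjective π hsurj
    rw [← hgen, AddMonoidHom.map_closure] at h1
    have himg : (⇑π) '' {g1, g2} = {π g1, (0 : (ZMod m × ZMod (m * n)) ⧸ H)} := by
      rw [Set.image_insert_eq, Set.image_singleton, hg2z]
    rw [himg] at h1
    refine top_unique ?_
    rw [← h1]
    refine (AddSubgroup.closure_le _).2 ?_
    rintro y (rfl | rfl)
    · exact AddSubgroup.subset_closure rfl
    · exact zero_mem _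
  have hcardG : Nat.card (ZMod m × ZMod (m * n)) = m * (m * n) := by
    simp [Nat.card_prod, Nat.card_zmod]
  have hcardH : Nat.card H = m * n := by
    rw [hH, Nat.card_zmultiples, hg2]
  have hquot : Nat.card ((ZMod m × ZMod (m * n)) ⧸ H) = m := by
    have h2 := AddSubgroup.card_eq_card_quotient_mul_card_addSubgroup H
    rw [hcardG, hcardH] at h2
    have hpos : 0 < m * n := by positivity
    exact (Nat.eq_of_mul_eq_mul_right hpos h2.symm)
  have hord : addOrderOf (π g1) = m := by
    have hz : AddSubgroup.zmultiples (π g1) = ⊤ := by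
      rw [AddSubgroup.zmultiples_eq_closure, htop]
    have h3 : Nat.card (AddSubgroup.zmultiples (π g1)) =
        Nat.card ((ZMod m × ZMod (m * n)) ⧸ H) := by
      rw [hz]; exact Nat.card_congr AddSubgroup.topEquiv.toEquiv
    rw [← Nat.card_zmultiples, h3, hquot]
  have hzero : x • π g1 = 0 := by
    rw [← map_zsmul, QuotientAddGroup.mk'_apply, QuotientAddGroup.eq_zero_iff]
    exact hx
  rw [← hord]
  exact addOrderOf_dvd_iff_zsmul_eq_zero.2 hzero

/-- The sequence `g^{mn-1} (g₁+g)^{m-1} (g₂+g)^{mn-1} (-g₁+g₂+g)^{m-1}`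
over `C_m ⊕ C_{mn}`, where `{g₁, g₂}` is a generating set with `ord g₂ = mn`, has length
`2m + 2mn - 4 = s(G) - 1` and no zero-sum subsequence of length `mn = exp(G)`. -/
theorem stmt_4 (m n : ℕ) (hm : 2 ≤ m) (hn : 0 < n)
    (g1 g2 : ZMod m × ZMod (m * n)) (hne : g1 ≠ g2)
    (hg2 : addOrderOf g2 = m * n)
    (hgen : AddSubgroup.closure ({g1, g2} : Set (ZMod m × ZMod (m * n))) = ⊤)
    (g : ZMod m × ZMod (m * n)) :
    (Multiset.replicate (m * n - 1) g +
        Multiset.replicate (m - 1) (g1 + g) +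
        Multiset.replicate (m * n - 1) (g2 + g) +
        Multiset.replicate (m - 1) (-g1 + g2 + g)).card = 2 * m + 2 * (m * n) - 4 ∧
    ¬ ∃ T ≤ Multiset.replicate (m * n - 1) g +
        Multiset.replicate (m - 1) (g1 + g) +
        Multiset.replicate (m * n - 1) (g2 + g) +
        Multiset.replicate (m - 1) (-g1 + g2 + g),
        T.sum = 0 ∧ Multiset.card T = m * n := by
  have hmle : m ≤ m * n := Nat.le_mul_of_pos_right m hn
  constructor
  · simp only [Multiset.card_add, Multiset.card_replicate]
    omega
  · rintro ⟨T, hT, hsum, hcard⟩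
    classical
    obtain ⟨u, v4, hu, hv4, rfl⟩ := split_le_add hT
    obtain ⟨w, v3, hw, hv3, rfl⟩ := split_le_add hu
    obtain ⟨v1, v2, hv1, hv2, rfl⟩ := split_le_add hw
    obtain ⟨a, ha, rfl⟩ := Multiset.le_replicate_iff.mp hv1
    obtain ⟨b, hb, rfl⟩ := Multiset.le_replicate_iff.mp hv2
    obtain ⟨c, hc, rfl⟩ := Multiset.le_replicate_iff.mp hv3
    obtain ⟨d, hd, rfl⟩ := Multiset.le_replicate_iff.mp hv4
    simp only [Multiset.card_add, Multiset.card_replicate] at hcard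
    simp only [Multiset.sum_add, Multiset.sum_replicate] at hsum
    -- pass to ℤ-scalars
    have hz : (a : ℤ) • g + (b : ℤ) • (g1 + g) + (c : ℤ) • (g2 + g) +
        (d : ℤ) • (-g1 + g2 + g) = 0 := by
      simp only [natCast_zsmul]; exact hsum
    have expand : (a : ℤ) • g + (b : ℤ) • (g1 + g) + (c : ℤ) • (g2 + g) +
        (d : ℤ) • (-g1 + g2 + g) =
        ((b : ℤ) - d) • g1 + ((c : ℤ) + d) • g2 + ((a : ℤ) + b + c + d) • g := by
      simp only [smul_add, add_smul, sub_smul, smul_neg]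
      abel
    rw [expand] at hz
    have habcd : (a : ℤ) + b + c + d = ((m * n : ℕ) : ℤ) := by exact_mod_cast hcard
    rw [habcd, exp_smul, add_zero] at hz
    -- first conclusion: m ∣ b - d, hence b = d
    have h4 : ((b : ℤ) - d) • g1 = -(((c : ℤ) + d) • g2) := eq_neg_of_add_eq_zero_left hz
    have hmem : ((b : ℤ) - d) • g1 ∈ AddSubgroup.zmultiples g2 :=
      AddSubgroup.mem_zmultiples_iff.mpr ⟨-((c : ℤ) + d), by rw [neg_smul, ← h4]⟩
    have hdvd1 : (m : ℤ) ∣ (b : ℤ) - d := key_lemma m n hm hn g1 g2 hg2 hgen _ hmem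
    have hbd0 : (b : ℤ) - d = 0 := by
      refine Int.eq_zero_of_abs_lt_dvd hdvd1 ?_
      rw [abs_lt]
      constructor <;> omega
    have hbd : b = d := by omega
    rw [hbd0, zero_smul, zero_add] at hz
    have hdvd2 := addOrderOf_dvd_iff_zsmul_eq_zero.2 hz
    rw [hg2] at hdvd2
    have hdvdN : (m * n) ∣ (c + d) := by exact_mod_cast hdvd2
    obtain ⟨k, hk⟩ := hdvdN
    have hklt : k < 2 := by
      refine Nat.lt_of_mul_lt_mul_left (a := m * n) ?_
      rw [← hk]
      omega
    interval_cases k <;> omega
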